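/- Hadwiger vectors under the colorful hypothesis: Let A₁, …, Aₙ be pairwise disjoint compact convex sets in ℝ², colored red, green, blue, such that for every i < j < k with Aᵢ, Aⱼ, Aₖ of three different colors there is an (f,α)-transversal intersecting them in order. Then for every direction d, the middle colorful (f,α)-separating sign vector x of the family in direction d is Hadwiger: there are no indices i < j < k with xᵢ, xⱼ, xₖ of three different colors and (xᵢ, xⱼ, xₖ) equal to (−1, 1, −1) or (1, −1, 1). -/

import Mathlib

open MeasureTheory TopologicalSpace
open scoped Classical

noncomputable section

/-- The plane. -/
abbrev Pt : Type := ℝ × ℝ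

/-- Planar cross product. -/
def pcross (v w : Pt) : ℝ := v.1 * w.2 - v.2 * w.1

/-- A directed line in the plane: a base point and a nonzero direction vector. -/
structure DLine : Type where
  p : Pt
  v : Pt
  hv : v ≠ 0

/-- The closed half-plane to the left of a directed line. -/
def DLine.left (ℓ : DLine) : Set Pt := {q | 0 ≤ pcross ℓ.v (q - ℓ.p)}

/-- The closed half-plane to the right of a directed line. -/
def DLine.right (ℓ : DLine) : Set Pt := {q | pcross ℓ.v (q - ℓ.p) ≤ 0}

/-- The set of points of the line. -/
def DLine.line (ℓ : DLine) : Set Pt := {q | pcross ℓ.v (q - ℓ.p) = 0}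

/-- Parametrization of the line along its direction. -/
def DLine.pt (ℓ : DLine) (t : ℝ) : Pt := ℓ.p + t • ℓ.v

/-- `f` is a monotone function on convex sets. -/
def MonoConvex (f : Set Pt → ℝ) : Prop :=
  ∀ A B : Set Pt, Convex ℝ A → Convex ℝ B → A ⊆ B → f A ≤ f B

/-- `ℓ` is an `(f, α)`-stabber of `C`. -/
def Stabs (f : Set Pt → ℝ) (α : ℝ) (ℓ : DLine) (C : Set Pt) : Prop :=
  α ≤ f (ℓ.left ∩ C) ∧ α ≤ f (ℓ.right ∩ C)

/-- `ℓ` meets the sets `C 0, …, C (k-1)` in this order along its direction. -/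
def MeetsInOrder (ℓ : DLine) {k : ℕ} (C : Fin k → Set Pt) : Prop :=
  ∃ t : Fin k → ℝ, Monotone t ∧ ∀ m, ℓ.pt (t m) ∈ C m

/-- `ℓ` meets three sets in the order `A, B, C`. -/
def Meets3 (ℓ : DLine) (A B C : Set Pt) : Prop :=
  ∃ s t u : ℝ, s ≤ t ∧ t ≤ u ∧ ℓ.pt s ∈ A ∧ ℓ.pt t ∈ B ∧ ℓ.pt u ∈ C

/-- `f` is continuous with respect to the Hausdorff metric on nonempty compact sets. -/
def HausCont (f : Set Pt → ℝ) : Prop :=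
  Continuous fun K : NonemptyCompacts Pt => f (K : Set Pt)

/-- The percent-area (normalized area) function of `K`. -/
def pArea (K : Set Pt) (C : Set Pt) : ℝ :=
  (volume (C ∩ K)).toReal / (volume K).toReal

/-- `ℓ` is an `(f, α)`-stabber of `K` for the percent-area function of `K`. -/
def StabsPA (α : ℝ) (ℓ : DLine) (K : Set Pt) : Prop :=
  α ≤ pArea K (ℓ.left ∩ K) ∧ α ≤ pArea K (ℓ.right ∩ K)

/-- The reduced set `C'`: points of `C` through which the line in direction `v`
is an `(f, α)`-stabber of `C` (i.e. `C` minus the maximal pieces of `f`-value `< α`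
on each side). -/
def reduceSet (f : Set Pt → ℝ) (α : ℝ) (v : Pt) (hv : v ≠ 0) (C : Set Pt) : Set Pt :=
  {x ∈ C | Stabs f α ⟨x, v, hv⟩ C}

/-- The middle value of three reals. -/
def mid3 (a b c : ℝ) : ℝ := a + b + c - max a (max b c) - min a (min b c)

/-- The colorful `(f, α)`-separating sign of a set with respect to a directed line. -/
def signOf (f : Set Pt → ℝ) (α : ℝ) (ℓ : DLine) (C : Set Pt) : ℤ :=
  if Stabs f α ℓ C then 0 else if f (ℓ.right ∩ C) < α then -1 else 1

/-- The middle `(f, α)`-separating line of a colored family in direction `d`: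
the line parallel to `d` crossing `d^⊥` at `(u₂ + v₂)/2`, where `u₂` (resp. `v₂`)
is the middle value of the color-wise sups (resp. infs) of the endpoints of the
projections of the reduced sets onto `d^⊥`. -/
def middleLine (f : Set Pt → ℝ) (α : ℝ) (d : Pt) (hd : d ≠ 0)
    {n : ℕ} (C : Fin n → Set Pt) (color : Fin n → Fin 3) : DLine :=
  let a : Fin n → ℝ := fun i => sInf ((fun x => pcross d x) '' reduceSet f α d hd (C i))
  let b : Fin n → ℝ := fun i => sSup ((fun x => pcross d x) '' reduceSet f α d hd (C i))
  let p : Fin 3 → ℝ := fun c => sSup (a '' {i | color i = c})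
  let q : Fin 3 → ℝ := fun c => sInf (b '' {i | color i = c})
  let θ : ℝ := (mid3 (p 0) (p 1) (p 2) + mid3 (q 0) (q 1) (q 2)) / 2
  ⟨(θ / (d.1 ^ 2 + d.2 ^ 2)) • (-d.2, d.1), d, hd⟩

/-- A colored sign vector is balanced if for every two colors there is a coordinate
of one color equal to `1` and a coordinate of the other color equal to `-1`. -/
def BalancedVec {n : ℕ} (x : Fin n → ℤ) (color : Fin n → Fin 3) : Prop :=
  ∀ c₁ c₂ : Fin 3, c₁ ≠ c₂ → ∃ i j : Fin n, color i = c₁ ∧ color j = c₂ ∧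
    ((x i = 1 ∧ x j = -1) ∨ (x i = -1 ∧ x j = 1))

/-- A colored sign vector is Hadwiger if no three increasing, differently colored
coordinates form the pattern `(-1, 1, -1)` or `(1, -1, 1)`. -/
def HadwigerVec {n : ℕ} (x : Fin n → ℤ) (color : Fin n → Fin 3) : Prop :=
  ∀ i j k : Fin n, i < j → j < k →
    color i ≠ color j → color i ≠ color k → color j ≠ color k →
    ¬ ((x i = -1 ∧ x j = 1 ∧ x k = -1) ∨ (x i = 1 ∧ x j = -1 ∧ x k = 1))

/-- The axis-aligned rectangle `[0,a] × [0,b]`. -/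
def rect (a b : ℝ) : Set Pt := Set.Icc (0:ℝ) a ×ˢ Set.Icc (0:ℝ) b

/-- The two short (vertical) sides of the rectangle `[0,a] × [0,b]` (for `b < a`). -/
def shortSides (a b : ℝ) : Set Pt :=
  ({(0:ℝ)} ×ˢ Set.Icc (0:ℝ) b) ∪ ({a} ×ˢ Set.Icc (0:ℝ) b)

/-- A directed line does not intersect the short sides of the rectangle. -/
def avoidsShort (a b : ℝ) (ℓ : DLine) : Prop := ℓ.line ∩ shortSides a b = ∅

/-- Every directed line through `p` avoiding the short sides cuts the rectangle into
pieces of area fractions exactly `α` and `1 - α`. -/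
def cutsExactly (a b α : ℝ) (p : Pt) : Prop :=
  ∀ ℓ : DLine, p ∈ ℓ.line → avoidsShort a b ℓ →
    ((pArea (rect a b) (ℓ.left ∩ rect a b) = α ∧
        pArea (rect a b) (ℓ.right ∩ rect a b) = 1 - α) ∨
     (pArea (rect a b) (ℓ.left ∩ rect a b) = 1 - α ∧
        pArea (rect a b) (ℓ.right ∩ rect a b) = α))

/-- Reversed line. -/
def DLine.rev (m : DLine) : DLine := ⟨m.p, -m.v, neg_ne_zero.mpr m.hv⟩

lemma pcross_neg (v w : Pt) : pcross (-v) w = -pcross v w := by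
  simp [pcross]; ring

lemma rev_right (m : DLine) : (m.rev).right = m.left := by
  ext q; simp [DLine.rev, DLine.right, DLine.left, pcross_neg]

lemma pcross_affine (w x y p : Pt) (a b : ℝ) (hab : a + b = 1) :
    pcross w (a • x + b • y - p) = a * pcross w (x - p) + b * pcross w (y - p) := by
  have hb : b = 1 - a := by linarith
  subst hb
  simp [pcross, Prod.smul_def, smul_eq_mul]
  ring

lemma left_convex (ℓ : DLine) : Convex ℝ ℓ.left := by
  intro x hx y hy a b ha hb hab
  show 0 ≤ pcross ℓ.v (a • x + b • y - ℓ.p)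
  rw [pcross_affine _ _ _ _ a b hab]
  exact add_nonneg (mul_nonneg ha hx) (mul_nonneg hb hy)

lemma right_convex (ℓ : DLine) : Convex ℝ ℓ.right := by
  intro x hx y hy a b ha hb hab
  show pcross ℓ.v (a • x + b • y - ℓ.p) ≤ 0
  rw [pcross_affine _ _ _ _ a b hab]
  have h1 : a * pcross ℓ.v (x - ℓ.p) ≤ 0 := mul_nonpos_of_nonneg_of_nonpos ha hx
  have h2 : b * pcross ℓ.v (y - ℓ.p) ≤ 0 := mul_nonpos_of_nonneg_of_nonpos hb hy
  linarith

/-- Extraction: if `f(H ∩ C) ≥ α` but `f(m.right ∩ C) < α`, some point of `H ∩ C`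
lies strictly left of `m`. -/
lemma extract (f : Set Pt → ℝ) (hf : MonoConvex f) (α : ℝ) (C H : Set Pt)
    (hC : Convex ℝ C) (hH : Convex ℝ H) (m : DLine)
    (h1 : α ≤ f (H ∩ C)) (h2 : f (m.right ∩ C) < α) :
    ∃ q, q ∈ H ∩ C ∧ 0 < pcross m.v (q - m.p) := by
  by_contra hcon
  push_neg at hcon
  have hsub : H ∩ C ⊆ m.right ∩ C := by
    intro q hq
    exact ⟨hcon q hq, hq.2⟩
  have := hf (H ∩ C) (m.right ∩ C) (hH.inter hC) ((right_convex m).inter hC) hsub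
  linarith

lemma line_param (ℓ : DLine) (z : Pt) (hz : pcross ℓ.v (z - ℓ.p) = 0) :
    ∃ t, ℓ.pt t = z := by
  have hv := ℓ.hv
  simp only [pcross, Prod.fst_sub, Prod.snd_sub] at hz
  by_cases h1 : ℓ.v.1 ≠ 0
  · refine ⟨(z.1 - ℓ.p.1) / ℓ.v.1, ?_⟩
    have : ℓ.v.1 * (z.2 - ℓ.p.2) = ℓ.v.2 * (z.1 - ℓ.p.1) := by linarith
    apply Prod.ext
    · show ℓ.p.1 + (z.1 - ℓ.p.1) / ℓ.v.1 * ℓ.v.1 = z.1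
      field_simp
      ring
    · show ℓ.p.2 + (z.1 - ℓ.p.1) / ℓ.v.1 * ℓ.v.2 = z.2
      field_simp
      linarith [this]
  · push_neg at h1
    have h2 : ℓ.v.2 ≠ 0 := by
      intro h2
      exact hv (Prod.ext h1 h2)
    refine ⟨(z.2 - ℓ.p.2) / ℓ.v.2, ?_⟩
    have hz1 : z.1 - ℓ.p.1 = 0 := by
      have h3 : ℓ.v.2 * (z.1 - ℓ.p.1) = 0 := by rw [h1] at hz; linarith
      rcases mul_eq_zero.mp h3 with h | h
      · exact absurd h h2
      · exact h
    apply Prod.ext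
    · show ℓ.p.1 + (z.2 - ℓ.p.2) / ℓ.v.2 * ℓ.v.1 = z.1
      rw [h1]
      simp
      linarith
    · show ℓ.p.2 + (z.2 - ℓ.p.2) / ℓ.v.2 * ℓ.v.2 = z.2
      field_simp
      ring

/-- Crossing: a convex set with points strictly left of `m` on both closed sides of `ℓ`
has a point on `ℓ` strictly left of `m`. -/
lemma crossing (ℓ m : DLine) (A : Set Pt) (hA : Convex ℝ A)
    (q1 : Pt) (hq1 : q1 ∈ ℓ.left ∩ A) (hg1 : 0 < pcross m.v (q1 - m.p))
    (q2 : Pt) (hq2 : q2 ∈ ℓ.right ∩ A) (hg2 : 0 < pcross m.v (q2 - m.p)) :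
    ∃ t, ℓ.pt t ∈ A ∧ 0 < pcross m.v (ℓ.pt t - m.p) := by
  set cp := pcross ℓ.v (q1 - ℓ.p) with hcp
  set cm := pcross ℓ.v (q2 - ℓ.p) with hcm
  have hcp0 : 0 ≤ cp := hq1.1
  have hcm0 : cm ≤ 0 := hq2.1
  by_cases hzero : cp - cm = 0
  · -- both are zero; q2 lies on the line
    have hcm' : cm = 0 := by nlinarith
    obtain ⟨t, ht⟩ := line_param ℓ q2 hcm'
    exact ⟨t, by rw [ht]; exact hq2.2, by rw [ht]; exact hg2⟩
  · set s : ℝ := -cm / (cp - cm) with hs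
    have hdpos : 0 < cp - cm := lt_of_le_of_ne (by linarith) (Ne.symm hzero)
    have hs0 : 0 ≤ s := div_nonneg (by linarith) (le_of_lt hdpos)
    have hs1 : s ≤ 1 := by
      rw [hs, div_le_one hdpos]; linarith
    have hab : s + (1 - s) = 1 := by ring
    set z : Pt := s • q1 + (1 - s) • q2 with hz
    have hzA : z ∈ A := hA hq1.2 hq2.2 hs0 (by linarith) hab
    have hkey : s * (cp - cm) = -cm := by
      rw [hs]; exact div_mul_cancel₀ _ hzero
    have hzline : pcross ℓ.v (z - ℓ.p) = 0 := by
      rw [hz, pcross_affine _ _ _ _ s (1 - s) hab, ← hcp, ← hcm]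
      linear_combination hkey
    have hzpos : 0 < pcross m.v (z - m.p) := by
      rw [hz, pcross_affine _ _ _ _ s (1 - s) hab]
      rcases eq_or_lt_of_le hs0 with hzs | hzs
      · rw [← hzs]; simpa using hg2
      · have := mul_pos hzs hg1
        have := mul_nonneg (by linarith : (0:ℝ) ≤ 1 - s) hg2.le
        linarith
    obtain ⟨t, ht⟩ := line_param ℓ z hzline
    exact ⟨t, by rw [ht]; exact hzA, by rw [ht]; exact hzpos⟩

/-- Disjoint convex subsets of ℝ with a separating witness pair are fully ordered. -/
lemma ordSep (S T : Set ℝ) (hS : Convex ℝ S) (hT : Convex ℝ T) (hd : Disjoint S T)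
    (s t : ℝ) (hs : s ∈ S) (ht : t ∈ T) (hst : s ≤ t) :
    ∀ x ∈ S, ∀ y ∈ T, x < y := by
  intro x hx y hy
  by_contra hxy
  push_neg at hxy
  by_cases hcase : t ≤ x
  · have : t ∈ S := hS.ordConnected.out hs hx ⟨hst, hcase⟩
    exact Set.disjoint_left.mp hd this ht
  · push_neg at hcase
    have : x ∈ T := hT.ordConnected.out hy ht ⟨hxy, le_of_lt hcase⟩
    exact Set.disjoint_left.mp hd hx this

lemma pt_combo (ℓ : DLine) (a b t1 t2 : ℝ) (hab : a + b = 1) :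
    ℓ.pt (a * t1 + b * t2) = a • ℓ.pt t1 + b • ℓ.pt t2 := by
  have hb : b = 1 - a := by linarith
  subst hb
  apply Prod.ext <;>
    simp [DLine.pt, Prod.smul_def, smul_eq_mul] <;> ring

lemma param_convex (ℓ : DLine) (A : Set Pt) (hA : Convex ℝ A) :
    Convex ℝ {t : ℝ | ℓ.pt t ∈ A} := by
  intro t1 ht1 t2 ht2 a b ha hb hab
  show ℓ.pt (a * t1 + b * t2) ∈ A
  rw [pt_combo ℓ a b t1 t2 hab]
  exact hA ht1 ht2 ha hb hab

lemma g_affine (m ℓ : DLine) (t : ℝ) :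
    pcross m.v (ℓ.pt t - m.p) =
      pcross m.v (ℓ.p - m.p) + t * pcross m.v ℓ.v := by
  simp [DLine.pt, pcross, Prod.smul_def, smul_eq_mul]
  ring

/-- Core quantitative separation contradiction. -/
lemma core (f : Set Pt → ℝ) (hf : MonoConvex f) (α : ℝ) (m ℓ : DLine)
    (Ai Aj Ak : Set Pt) (hAi : Convex ℝ Ai) (hAj : Convex ℝ Aj) (hAk : Convex ℝ Ak)
    (dij : Disjoint Ai Aj) (djk : Disjoint Aj Ak)
    (sti : Stabs f α ℓ Ai) (stj : Stabs f α ℓ Aj) (stk : Stabs f α ℓ Ak)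
    (hm3 : Meets3 ℓ Ai Aj Ak)
    (hi : f (m.right ∩ Ai) < α) (hj : f (m.left ∩ Aj) < α)
    (hk : f (m.right ∩ Ak) < α) : False := by
  obtain ⟨s, t, u, hst, htu, hsA, htA, huA⟩ := hm3
  -- points of Ai on line ℓ strictly left of m
  obtain ⟨qi1, hqi1, hgi1⟩ := extract f hf α Ai ℓ.left hAi (left_convex ℓ) m sti.1 hi
  obtain ⟨qi2, hqi2, hgi2⟩ := extract f hf α Ai ℓ.right hAi (right_convex ℓ) m sti.2 hi
  obtain ⟨ti, htiA, htig⟩ := crossing ℓ m Ai hAi qi1 hqi1 hgi1 qi2 hqi2 hgi2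
  -- points of Ak on line ℓ strictly left of m
  obtain ⟨qk1, hqk1, hgk1⟩ := extract f hf α Ak ℓ.left hAk (left_convex ℓ) m stk.1 hk
  obtain ⟨qk2, hqk2, hgk2⟩ := extract f hf α Ak ℓ.right hAk (right_convex ℓ) m stk.2 hk
  obtain ⟨tk, htkA, htkg⟩ := crossing ℓ m Ak hAk qk1 hqk1 hgk1 qk2 hqk2 hgk2
  -- point of Aj on line ℓ strictly right of m (strictly left of m.rev)
  have hj' : f ((m.rev).right ∩ Aj) < α := by rw [rev_right]; exact hj
  obtain ⟨qj1, hqj1, hgj1⟩ :=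
    extract f hf α Aj ℓ.left hAj (left_convex ℓ) m.rev stj.1 hj'
  obtain ⟨qj2, hqj2, hgj2⟩ :=
    extract f hf α Aj ℓ.right hAj (right_convex ℓ) m.rev stj.2 hj'
  obtain ⟨tj, htjA, htjg⟩ := crossing ℓ m.rev Aj hAj qj1 hqj1 hgj1 qj2 hqj2 hgj2
  have htjg' : pcross m.v (ℓ.pt tj - m.p) < 0 := by
    have : (m.rev).v = -m.v := rfl
    have hp : (m.rev).p = m.p := rfl
    rw [this, hp, pcross_neg] at htjg
    linarith
  -- ordering of parameters
  have hSij : Disjoint {r : ℝ | ℓ.pt r ∈ Ai} {r : ℝ | ℓ.pt r ∈ Aj} := by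
    rw [Set.disjoint_left]
    intro r hr1 hr2
    exact Set.disjoint_left.mp dij hr1 hr2
  have hSjk : Disjoint {r : ℝ | ℓ.pt r ∈ Aj} {r : ℝ | ℓ.pt r ∈ Ak} := by
    rw [Set.disjoint_left]
    intro r hr1 hr2
    exact Set.disjoint_left.mp djk hr1 hr2
  have hij : ti < tj :=
    ordSep _ _ (param_convex ℓ Ai hAi) (param_convex ℓ Aj hAj) hSij s t hsA htA hst
      ti htiA tj htjA
  have hjk : tj < tk :=
    ordSep _ _ (param_convex ℓ Aj hAj) (param_convex ℓ Ak hAk) hSjk t u htA huA htu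
      tj htjA tk htkA
  -- affine contradiction
  rw [g_affine] at htig htjg' htkg
  nlinarith [mul_pos (sub_pos.mpr hjk) htig, mul_pos (sub_pos.mpr hij) htkg]

lemma signOf_neg_one (f : Set Pt → ℝ) (α : ℝ) (ℓ : DLine) (C : Set Pt)
    (h : signOf f α ℓ C = -1) : f (ℓ.right ∩ C) < α := by
  unfold signOf at h
  split_ifs at h with h1 h2
  · exact h2

lemma signOf_one (f : Set Pt → ℝ) (α : ℝ) (ℓ : DLine) (C : Set Pt)
    (h : signOf f α ℓ C = 1) : f (ℓ.left ∩ C) < α := by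
  unfold signOf at h
  by_cases h1 : Stabs f α ℓ C
  · simp [h1] at h
  · by_cases h2 : f (ℓ.right ∩ C) < α
    · simp [h1, h2] at h
    · push_neg at h2
      rw [Stabs, not_and_or] at h1
      rcases h1 with h1 | h1
      · exact lt_of_not_ge h1
      · exact absurd h2 h1

/-- under the colorful in-order transversal hypothesis for pairwise
disjoint sets, the middle colorful `(f,α)`-separating sign vector in every direction
is Hadwiger. -/
theorem stmt13 (n : ℕ) (A : Fin n → Set Pt) (color : Fin n → Fin 3)
    (hcomp : ∀ i, IsCompact (A i)) (hconv : ∀ i, Convex ℝ (A i))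
    (hdisj : Pairwise (Function.onFun Disjoint A))
    (f : Set Pt → ℝ) (hf : MonoConvex f) (α : ℝ) (hα : 0 < α)
    (h : ∀ i j k : Fin n, i < j → j < k →
      color i ≠ color j → color i ≠ color k → color j ≠ color k →
      ∃ ℓ : DLine, Stabs f α ℓ (A i) ∧ Stabs f α ℓ (A j) ∧ Stabs f α ℓ (A k) ∧
        Meets3 ℓ (A i) (A j) (A k)) :
    ∀ (d : Pt) (hd : d ≠ 0),
      HadwigerVec (fun i => signOf f α (middleLine f α d hd A color) (A i)) color := by
  intro d hd
  intro i j k hij hjk hcij hcik hcjk hpat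
  set m := middleLine f α d hd A color with hm
  obtain ⟨ℓ, si, sj, sk, hm3⟩ := h i j k hij hjk hcij hcik hcjk
  have dij : Disjoint (A i) (A j) := hdisj hij.ne
  have djk : Disjoint (A j) (A k) := hdisj hjk.ne
  simp only at hpat
  rcases hpat with ⟨h1, h2, h3⟩ | ⟨h1, h2, h3⟩
  · exact core f hf α m ℓ (A i) (A j) (A k) (hconv i) (hconv j) (hconv k)
      dij djk si sj sk hm3
      (signOf_neg_one f α m (A i) h1) (signOf_one f α m (A j) h2)
      (signOf_neg_one f α m (A k) h3)
  · have hrev_left : (m.rev).left = m.right := by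
      ext q; simp [DLine.rev, DLine.right, DLine.left, pcross_neg]
    exact core f hf α m.rev ℓ (A i) (A j) (A k) (hconv i) (hconv j) (hconv k)
      dij djk si sj sk hm3
      (by rw [rev_right]; exact signOf_one f α m (A i) h1)
      (by rw [hrev_left]; exact signOf_neg_one f α m (A j) h2)
      (by rw [rev_right]; exact signOf_one f α m (A k) h3)
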